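/- Let U = {z ∈ ℂ : |z − 1/2| < 1/2} and let γ(z) = exp((1/2) log z) be the principal square root. Then γ maps U into U: if |z − 1/2| < 1/2 then |√z − 1/2| < 1/2. -/

import Mathlib

/-- The principal square root `γ(z) = exp((1/2) log z)` maps the open disk `U`
of center `1/2` and radius `1/2` into itself. -/
theorem stmt_19 (z : ℂ) (hz : ‖z - 1/2‖ < 1/2) :
    ‖Complex.exp ((1/2 : ℂ) * Complex.log z) - 1/2‖ < 1/2 := by
  have hz0 : z ≠ 0 := by
    intro h
    rw [h] at hz
    norm_num at hz
  set w := Complex.exp ((1/2 : ℂ) * Complex.log z) with hw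
  have hw2 : w ^ 2 = z := by
    rw [hw, ← Complex.exp_nat_mul]
    rw [show (2 : ℕ) * ((1/2 : ℂ) * Complex.log z) = Complex.log z by push_cast; ring]
    exact Complex.exp_log hz0
  -- Re w ≥ 0
  have hre : 0 ≤ w.re := by
    rw [hw, Complex.exp_re]
    apply mul_nonneg (Real.exp_pos _).le
    apply Real.cos_nonneg_of_mem_Icc
    have him : ((1/2 : ℂ) * Complex.log z).im = z.arg / 2 := by
      simp [Complex.log_im]
      ring
    rw [him]
    constructor
    · have := Complex.neg_pi_lt_arg z
      linarith [Real.pi_pos]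
    · have := Complex.arg_le_pi z
      linarith [Real.pi_pos]
  -- translate hypothesis: normSq z < z.re
  have h1 : Complex.normSq z < z.re := by
    have hns : Complex.normSq (z - 1/2) = Complex.normSq z - z.re + 1/4 := by
      simp [Complex.normSq_apply, Complex.sub_re, Complex.sub_im, Complex.normSq_sub]
      ring
    nlinarith [Complex.normSq_nonneg (z - 1/2), Complex.sq_norm (z - 1/2),
      mul_self_lt_mul_self (norm_nonneg (z - 1/2)) hz, hns]
  -- deduce normSq w < w.re
  have h2 : Complex.normSq w < w.re := by
    have hzre : z.re = w.re ^ 2 - w.im ^ 2 := by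
      rw [← hw2]
      simp [pow_two, Complex.mul_re]
    have hzns : Complex.normSq z = (Complex.normSq w) ^ 2 := by
      rw [← hw2, map_pow]
    nlinarith [Complex.normSq_nonneg w, Complex.normSq_apply w, sq_nonneg w.im]
  -- conclude
  have hns2 : Complex.normSq (w - 1/2) = Complex.normSq w - w.re + 1/4 := by
    simp [Complex.normSq_apply, Complex.sub_re, Complex.sub_im]
    ring
  have habs : ‖w - 1/2‖ ^ 2 < (1/2 : ℝ) ^ 2 := by
    rw [Complex.sq_norm, hns2]
    nlinarith
  nlinarith [norm_nonneg (w - 1/2)]
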